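/- (C³ Koebe distortion lemma.) Let I and J be intervals and let g : I → J be a C³ diffeomorphism whose Schwarzian derivative S(g) = g'''/g' − (3/2)(g''/g')² is nonnegative on I. Then the nonlinearity n(g) = g''/g' satisfies |n(g)(x)| ≤ 2/d_I(x) for every x in the interior of I, where d_I(x) is the distance from x to the boundary of I. -/

import Mathlib

open Set

/-- Riccati comparison step: if `n' ≥ n²/2` and `n` never vanishes on `[c,d]`, then
`t ↦ (n t)⁻¹ + t/2` is nonincreasing from `c` to `d`. -/
lemma riccati_aux (c d : ℝ) (hcd : c ≤ d) (n N' : ℝ → ℝ)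
    (hder : ∀ t ∈ Icc c d, HasDerivWithinAt n (N' t) (Icc c d) t)
    (hineq : ∀ t ∈ Icc c d, n t ^ 2 / 2 ≤ N' t)
    (hne : ∀ t ∈ Icc c d, n t ≠ 0) :
    (n d)⁻¹ + d / 2 ≤ (n c)⁻¹ + c / 2 := by
  have hcont : ContinuousOn n (Icc c d) := fun t ht => (hder t ht).continuousWithinAt
  have hanti : AntitoneOn (fun t => (n t)⁻¹ + t / 2) (Icc c d) := by
    apply antitoneOn_of_hasDerivWithinAt_nonpos (f' := fun t => -N' t / n t ^ 2 + 1 / 2)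
      (convex_Icc c d)
    · exact (hcont.inv₀ hne).add (continuous_id.div_const 2).continuousOn
    · intro t ht
      rw [interior_Icc] at ht ⊢
      have h1 : HasDerivWithinAt n (N' t) (Ioo c d) t :=
        (hder t (Ioo_subset_Icc_self ht)).mono Ioo_subset_Icc_self
      exact (h1.inv (hne t (Ioo_subset_Icc_self ht))).add
        ((hasDerivWithinAt_id t (Ioo c d)).div_const 2)
    · intro t ht
      rw [interior_Icc] at ht
      have ht' := Ioo_subset_Icc_self ht
      have h2 : (0:ℝ) < n t ^ 2 := pow_two_pos_of_ne_zero (hne t ht')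
      have h3 : n t ^ 2 / 2 ≤ N' t := hineq t ht'
      have : (1:ℝ) / 2 ≤ N' t / n t ^ 2 := by
        rw [le_div_iff₀ h2]; nlinarith
      have hdiv : -N' t / n t ^ 2 = -(N' t / n t ^ 2) := by ring
      rw [hdiv]; linarith
  exact hanti ⟨le_rfl, hcd⟩ ⟨hcd, le_rfl⟩ hcd

/-- Lemma 10, the C³ Koebe distortion lemma: if `g` is a C³
diffeomorphism of the interval `I = [a,b]` with nonnegative Schwarzian derivative, then its
nonlinearity `n(g) = g''/g'` satisfies `|n(g)(x)| ≤ 2/d_I(x)` for every interior point `x`,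
where `d_I(x) = min (x - a) (b - x)` is the distance from `x` to the boundary of `I`. -/
theorem koebe_distortion_C3 (a b : ℝ) (hab : a < b) (g g' g'' g''' : ℝ → ℝ)
    (hd1 : ∀ x ∈ Icc a b, HasDerivWithinAt g (g' x) (Icc a b) x)
    (hd2 : ∀ x ∈ Icc a b, HasDerivWithinAt g' (g'' x) (Icc a b) x)
    (hd3 : ∀ x ∈ Icc a b, HasDerivWithinAt g'' (g''' x) (Icc a b) x)
    (hcont3 : ContinuousOn g''' (Icc a b))
    (hne : ∀ x ∈ Icc a b, g' x ≠ 0)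
    (hinj : Set.InjOn g (Icc a b))
    (hschwarz : ∀ x ∈ Icc a b, 0 ≤ g''' x / g' x - (3 / 2) * (g'' x / g' x) ^ 2) :
    ∀ x ∈ Ioo a b, |g'' x / g' x| ≤ 2 / min (x - a) (b - x) := by
  set n : ℝ → ℝ := fun t => g'' t / g' t with hn
  set N' : ℝ → ℝ := fun t => g''' t / g' t - (g'' t / g' t) ^ 2 with hN'
  have hder : ∀ t ∈ Icc a b, HasDerivWithinAt n (N' t) (Icc a b) t := by
    intro t ht
    have h := (hd3 t ht).div (hd2 t ht) (hne t ht)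
    refine h.congr_deriv ?_
    have := hne t ht
    simp only [hN']
    field_simp
  have hineq : ∀ t ∈ Icc a b, n t ^ 2 / 2 ≤ N' t := by
    intro t ht
    have := hschwarz t ht
    simp only [hn, hN']
    nlinarith [sq_nonneg (g'' t / g' t)]
  have hcont : ContinuousOn n (Icc a b) := fun t ht => (hder t ht).continuousWithinAt
  have hmono : MonotoneOn n (Icc a b) := by
    apply monotoneOn_of_hasDerivWithinAt_nonneg (f' := N') (convex_Icc a b) hcont
    · intro t ht
      rw [interior_Icc] at ht
      exact (hder t (Ioo_subset_Icc_self ht)).mono interior_subset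
    · intro t ht
      rw [interior_Icc] at ht
      exact le_trans (by positivity) (hineq t (Ioo_subset_Icc_self ht))
  intro x hx
  obtain ⟨hax, hxb⟩ := hx
  have hxI : x ∈ Icc a b := ⟨hax.le, hxb.le⟩
  have hbpos : (0:ℝ) < b - x := sub_pos.2 hxb
  have hapos : (0:ℝ) < x - a := sub_pos.2 hax
  -- Right bound: n x ≤ 2/(b-x)
  have hright : n x ≤ 2 / (b - x) := by
    by_contra h
    push_neg at h
    have hnx : 0 < n x := lt_trans (by positivity) h
    have hsub : Icc x b ⊆ Icc a b := Icc_subset_Icc hax.le le_rfl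
    have hnpos : ∀ t ∈ Icc x b, 0 < n t := fun t ht =>
      lt_of_lt_of_le hnx (hmono hxI (hsub ht) ht.1)
    have key := riccati_aux x b hxb.le n N'
      (fun t ht => (hder t (hsub ht)).mono hsub)
      (fun t ht => hineq t (hsub ht))
      (fun t ht => (hnpos t ht).ne')
    have hnb : 0 < n b := hnpos b ⟨hxb.le, le_rfl⟩
    have hinvb : 0 < (n b)⁻¹ := inv_pos.2 hnb
    rw [div_lt_iff₀ hbpos] at h
    have hlt : (0:ℝ) < (n x)⁻¹ - (b - x) / 2 := by linarith
    have hprod := mul_pos hnx hlt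
    nlinarith [mul_inv_cancel₀ hnx.ne']
  -- Left bound: -2/(x-a) ≤ n x
  have hleft : -(2 / (x - a)) ≤ n x := by
    by_contra h
    push_neg at h
    have hnx : n x < 0 := lt_trans h (neg_lt_zero.2 (by positivity))
    have hsub : Icc a x ⊆ Icc a b := Icc_subset_Icc le_rfl hxb.le
    have hnneg : ∀ t ∈ Icc a x, n t < 0 := fun t ht =>
      lt_of_le_of_lt (hmono (hsub ht) hxI ht.2) hnx
    have key := riccati_aux a x hax.le n N'
      (fun t ht => (hder t (hsub ht)).mono hsub)
      (fun t ht => hineq t (hsub ht))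
      (fun t ht => (hnneg t ht).ne)
    have hna : n a < 0 := hnneg a ⟨le_rfl, hax.le⟩
    have hinva : (n a)⁻¹ < 0 := inv_neg''.2 hna
    have h' : n x * (x - a) < -2 := by
      rw [show -(2 / (x - a)) = (-2) / (x - a) by ring, lt_div_iff₀ hapos] at h
      linarith
    have hlt : (0:ℝ) < -(x - a) / 2 - (n x)⁻¹ := by linarith
    have hprod := mul_pos (neg_pos.2 hnx) hlt
    nlinarith [mul_inv_cancel₀ hnx.ne]
  -- Combine
  have hmin : 0 < min (x - a) (b - x) := lt_min hapos hbpos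
  have h1 : 2 / (b - x) ≤ 2 / min (x - a) (b - x) :=
    div_le_div_of_nonneg_left (by norm_num) hmin (min_le_right _ _)
  have h2 : 2 / (x - a) ≤ 2 / min (x - a) (b - x) :=
    div_le_div_of_nonneg_left (by norm_num) hmin (min_le_left _ _)
  rw [abs_le]
  constructor <;> [linarith; linarith]
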